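/- If S is a convex full subquiver of Q̃^{(d,n)} such that π is injective on S_0 and π(S_0) is pairwise non-intertwining of maximal size (corresponding to a triangulation of C(n+2d+1, 2d)), then S contains at most one vertex from each ν_d-orbit; in particular, S is a slice. -/

import Mathlib

/-- `Dset m d A`: the set Ď(m,d) of (d+1)-tuples of integers with consecutive
gaps ≥ 2, cyclically (a_d + 2 ≤ a_0 + m). -/
def Dset (m d : ℕ) (A : Fin (d+1) → ℤ) : Prop :=
  (∀ i : Fin d, A i.castSucc + 2 ≤ A i.succ) ∧ A (Fin.last d) + 2 ≤ A 0 + (m : ℤ)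

/-- Reduction mod m with representatives in {1, …, m}. -/
def pimod (m : ℕ) (a : ℤ) : ℤ := (a - 1) % (m : ℤ) + 1

/-- Intertwining X ⋏ Y of two (d+1)-tuples regarded as cyclically ordered
d-simplices with entries mod m: for some cyclic shift l of the order on [m] and
cyclic rotations p, q of the index sets, the entries interleave strictly:
x_0 <_l y_0 <_l x_1 <_l ⋯ <_l x_d <_l y_d. -/
def Intertw (m d : ℕ) (X Y : Fin (d+1) → ℤ) : Prop :=
  ∃ l : ℤ, ∃ p q : Fin (d+1),
    (∀ i : Fin (d+1), (X (i + p) - l) % (m : ℤ) < (Y (i + q) - l) % (m : ℤ)) ∧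
    (∀ i : Fin d, (Y (i.castSucc + q) - l) % (m : ℤ) < (X (i.succ + p) - l) % (m : ℤ))

/-- i-th standard basis vector of ℤ^{d+1}. -/
def Evec (d : ℕ) (i : Fin (d+1)) : Fin (d+1) → ℤ := fun j => if j = i then 1 else 0

/-- Arrows of the quiver Q̃^{(d,n)} (with m = n + 2d + 1): A → A + E_i whenever
both endpoints are vertices. -/
def TArrow (m d : ℕ) (A B : Fin (d+1) → ℤ) : Prop :=
  Dset m d A ∧ Dset m d B ∧ ∃ i : Fin (d+1), B = A + Evec d i

/-! ### Auxiliary lemmas -/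

lemma aux_dset_lb {m d : ℕ} {A : Fin (d+1) → ℤ} (hA : Dset m d A) :
    ∀ i : Fin (d+1), A 0 + 2*(i:ℕ) ≤ A i := by
  intro i
  induction i using Fin.induction with
  | zero => simp
  | succ i ih =>
    have h := hA.1 i
    have h2 : ((i.succ : Fin (d+1)) : ℕ) = (i:ℕ) + 1 := Fin.val_succ i
    have h3 : ((i.castSucc : Fin (d+1)) : ℕ) = (i:ℕ) := rfl
    rw [h2]
    push_cast
    rw [h3] at ih
    omega

lemma aux_dset_mono {m d : ℕ} {A : Fin (d+1) → ℤ} (hA : Dset m d A) : StrictMono A := by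
  rw [Fin.strictMono_iff_lt_succ]
  intro i
  have := hA.1 i
  omega

lemma aux_dset_m_ge {m d : ℕ} {A : Fin (d+1) → ℤ} (hA : Dset m d A) : 2*d + 2 ≤ m := by
  have h1 := aux_dset_lb hA (Fin.last d)
  have h2 := hA.2
  simp [Fin.val_last] at h1
  omega

lemma aux_dset_shift {m d : ℕ} {A : Fin (d+1) → ℤ} (hA : Dset m d A) (k : ℤ) :
    Dset m d (fun j => A j + k) := by
  refine ⟨fun i => ?_, ?_⟩
  · have := hA.1 i; simp only []; omega
  · have := hA.2; simp only []; omega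

lemma aux_pimod_sub_emod (m : ℕ) (a l : ℤ) : (pimod m a - l) % m = (a - l) % m := by
  unfold pimod
  conv_lhs => rw [show (a - 1) % m + 1 - l = (a-1) % m + (1 - l) by ring, Int.add_emod,
    Int.emod_emod_of_dvd _ dvd_rfl, ← Int.add_emod]
  ring_nf

lemma aux_intertw_succ {m d : ℕ} {A : Fin (d+1) → ℤ} (hA : Dset m d A) :
    Intertw m d (fun j => pimod m (A j)) (fun j => pimod m (A j + 1)) := by
  have hm : (2:ℤ) ≤ m := by have := aux_dset_m_ge hA; omega
  have hmono := aux_dset_mono hA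
  have hb : ∀ i : Fin (d+1), 0 ≤ A i - A 0 ∧ A i - A 0 ≤ (m:ℤ) - 2 := by
    intro i
    have h1 : A 0 ≤ A i := hmono.monotone (Fin.zero_le i)
    have h2 : A i ≤ A (Fin.last d) := hmono.monotone (Fin.le_last i)
    have h3 := hA.2
    omega
  refine ⟨A 0, 0, 0, fun i => ?_, fun i => ?_⟩
  · simp only [add_zero, aux_pimod_sub_emod]
    have := hb i
    rw [Int.emod_eq_of_lt (by omega) (by omega),
      show A i + 1 - A 0 = (A i - A 0) + 1 by ring,
      Int.emod_eq_of_lt (by omega) (by omega)]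
    omega
  · simp only [add_zero, aux_pimod_sub_emod]
    have h1 := hb i.castSucc
    have h2 := hb i.succ
    have h3 := hA.1 i
    rw [show A i.castSucc + 1 - A 0 = (A i.castSucc - A 0) + 1 by ring,
      Int.emod_eq_of_lt (by omega) (by omega),
      Int.emod_eq_of_lt (by omega) (by omega)]
    omega

/-- big forward gap at position u (u = d means the cyclic gap) -/
def aux_biggap (m d : ℕ) (A : Fin (d+1) → ℤ) (u : ℕ) (hu : u ≤ d) : Prop :=
  if h : u < d then 3 ≤ A ⟨u+1, by omega⟩ - A ⟨u, by omega⟩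
  else 3 ≤ A 0 + (m:ℤ) - A (Fin.last d)

lemma aux_run_path (m d : ℕ) (u : ℕ) (hu : u ≤ d) (t : ℕ) (ht : t ≤ u + 1)
    (A : Fin (d+1) → ℤ) (hA : Dset m d A) (hg : aux_biggap m d A u hu) :
    Dset m d (fun i => A i + if u + 1 - t ≤ (i:ℕ) ∧ (i:ℕ) ≤ u then 1 else 0) ∧
    Relation.ReflTransGen (TArrow m d) A
      (fun i => A i + if u + 1 - t ≤ (i:ℕ) ∧ (i:ℕ) ≤ u then 1 else 0) := by
  induction t with
  | zero =>
    have e : (fun i : Fin (d+1) => A i + if u + 1 - 0 ≤ (i:ℕ) ∧ (i:ℕ) ≤ u then 1 else 0) = A := by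
      funext i
      rw [if_neg (show ¬(u + 1 - 0 ≤ (i:ℕ) ∧ (i:ℕ) ≤ u) by omega), add_zero]
    rw [e]; exact ⟨hA, .refl⟩
  | succ t ih =>
    obtain ⟨hDB, hPB⟩ := ih (by omega)
    set B := (fun i : Fin (d+1) => A i + if u + 1 - t ≤ (i:ℕ) ∧ (i:ℕ) ≤ u then 1 else 0) with hBdef
    set C := (fun i : Fin (d+1) => A i + if u + 1 - (t+1) ≤ (i:ℕ) ∧ (i:ℕ) ≤ u then 1 else 0)
      with hCdef
    have hkey : C = B + Evec d ⟨u - t, by omega⟩ := by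
      funext i
      simp only [hBdef, hCdef, Evec, Pi.add_apply, Fin.ext_iff]
      split_ifs <;> omega
    have hDC : Dset m d C := by
      constructor
      · intro i
        have hbase := hA.1 i
        have hvd : (i:ℕ) < d := i.isLt
        simp only [hCdef, Fin.coe_castSucc, Fin.val_succ]
        split_ifs with h1 h2 h2
        · omega
        · have hvi : (i:ℕ) = u := by omega
          unfold aux_biggap at hg
          rw [dif_pos (by omega : u < d)] at hg
          rw [show (⟨u+1, by omega⟩ : Fin (d+1)) = i.succ by
                ext; simp [Fin.val_succ, hvi],
              show (⟨u, by omega⟩ : Fin (d+1)) = i.castSucc by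
                ext; simp [Fin.coe_castSucc, hvi]] at hg
          omega
        · omega
        · omega
      · have hbase := hA.2
        simp only [hCdef, Fin.val_last, Fin.val_zero]
        by_cases hud : u = d
        · unfold aux_biggap at hg
          rw [dif_neg (by omega)] at hg
          split_ifs <;> omega
        · split_ifs <;> omega
    exact ⟨hDC, hPB.tail ⟨hDB, hDC, ⟨_, hkey⟩⟩⟩

lemma aux_gap_exists {m d : ℕ} {A : Fin (d+1) → ℤ} (hA : Dset m d A) (hm : 2*d + 3 ≤ m) :
    ∃ u : ℕ, ∃ hu : u ≤ d, aux_biggap m d A u hu := by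
  by_contra h
  push_neg at h
  have hub : ∀ i : Fin (d+1), A i ≤ A 0 + 2*(i:ℕ) := by
    intro i
    induction i using Fin.induction with
    | zero => simp
    | succ i ih =>
      have hvd : (i:ℕ) < d := i.isLt
      have hg := h (i:ℕ) (by omega)
      unfold aux_biggap at hg
      rw [dif_pos hvd] at hg
      push_neg at hg
      rw [show (⟨(i:ℕ)+1, by omega⟩ : Fin (d+1)) = i.succ by ext; simp,
          show (⟨(i:ℕ), by omega⟩ : Fin (d+1)) = i.castSucc by ext; simp] at hg
      have h2 : ((i.succ : Fin (d+1)) : ℕ) = (i:ℕ) + 1 := Fin.val_succ i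
      have h3 : ((i.castSucc : Fin (d+1)) : ℕ) = (i:ℕ) := rfl
      rw [h2]; rw [h3] at ih
      push_cast
      omega
  have hcyc := h d le_rfl
  unfold aux_biggap at hcyc
  rw [dif_neg (lt_irrefl d)] at hcyc
  push_neg at hcyc
  have := hub (Fin.last d)
  simp [Fin.val_last] at this
  have hm' : (2*d + 3 : ℤ) ≤ (m:ℤ) := by exact_mod_cast hm
  omega

lemma aux_path_succ {m d : ℕ} {A : Fin (d+1) → ℤ} (hA : Dset m d A) (hm : 2*d + 3 ≤ m) :
    Relation.ReflTransGen (TArrow m d) A (fun i => A i + 1) := by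
  obtain ⟨u, hu, hg⟩ := aux_gap_exists hA hm
  obtain ⟨hDB, hPB⟩ := aux_run_path m d u hu (u+1) le_rfl A hA hg
  set B := (fun i : Fin (d+1) => A i + if u + 1 - (u+1) ≤ (i:ℕ) ∧ (i:ℕ) ≤ u then 1 else 0)
    with hBdef
  by_cases hud : u = d
  · have e : B = fun i => A i + 1 := by
      funext i
      have : u + 1 - (u+1) ≤ (i:ℕ) ∧ (i:ℕ) ≤ u := by have := i.isLt; omega
      simp only [hBdef, if_pos this]
    rw [← e]; exact hPB
  · have hgB : aux_biggap m d B d le_rfl := by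
      unfold aux_biggap
      rw [dif_neg (lt_irrefl d)]
      have h2 := hA.2
      simp only [hBdef, Fin.val_last, Fin.val_zero]
      have h0 : ((0 : Fin (d+1)) : ℕ) = 0 := rfl
      split_ifs <;> omega
    obtain ⟨hDC, hPC⟩ := aux_run_path m d d le_rfl (d - u) (by omega) B hDB hgB
    have e : (fun i : Fin (d+1) => B i + if d + 1 - (d-u) ≤ (i:ℕ) ∧ (i:ℕ) ≤ d then 1 else 0)
        = fun i => A i + 1 := by
      funext i
      have hi := i.isLt
      simp only [hBdef]
      split_ifs <;> omega
    rw [e] at hPC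
    exact hPB.trans hPC

lemma aux_path_shift {m d : ℕ} {A : Fin (d+1) → ℤ} (hA : Dset m d A) (hm : 2*d + 3 ≤ m) :
    ∀ k : ℕ, Relation.ReflTransGen (TArrow m d) A (fun i => A i + (k:ℤ)) := by
  intro k
  induction k with
  | zero => simpa using Relation.ReflTransGen.refl
  | succ k ih =>
    have h1 : Dset m d (fun j => A j + (k:ℤ)) := aux_dset_shift hA k
    have h2 := aux_path_succ h1 hm
    have e : (fun i => (fun j => A j + (k:ℤ)) i + 1) = fun i => A i + ((k:ℕ)+1 : ℤ) := by
      funext i; push_cast; ring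
    rw [e] at h2
    have e2 : (fun i => A i + (((k+1):ℕ):ℤ)) = fun i => A i + ((k:ℕ)+1 : ℤ) := by
      funext i; push_cast; ring
    rw [e2]
    exact ih.trans h2

/-! ### Counting -/

def padP (d : ℕ) (P : Fin (d+1) → ℕ) : ℕ → ℤ := fun j => if h : j < d+1 then (P ⟨j,h⟩ : ℤ) else 0

def GB (d : ℕ) (P : Fin (d+1) → ℕ) : Fin (d+1) → ℤ :=
  fun i => 2*(i:ℕ) + ∑ j ∈ Finset.range (i:ℕ), padP d P j

lemma padP_nonneg (d : ℕ) (P : Fin (d+1) → ℕ) (j : ℕ) : 0 ≤ padP d P j := by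
  unfold padP; split_ifs <;> positivity

lemma sum_padP (d : ℕ) (P : Fin (d+1) → ℕ) :
    ∑ j ∈ Finset.range (d+1), padP d P j = ((∑ i, P i : ℕ) : ℤ) := by
  rw [← Fin.sum_univ_eq_sum_range (fun j => padP d P j) (d+1)]
  push_cast
  refine Finset.sum_congr rfl fun i _ => ?_
  unfold padP
  rw [dif_pos i.isLt]

/-- the gap tuple of B (with "slack" in the last slot) -/
def gapT (n d : ℕ) (B : Fin (d+1) → ℤ) : Fin (d+1) → ℤ := fun i =>
  if (i:ℕ) < d then B (i+1) - B i - 2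
  else (n:ℤ) + 2*d - 1 - B (Fin.last d)

lemma gapT_castSucc (n d : ℕ) (B : Fin (d+1) → ℤ) (i : Fin d) :
    gapT n d B i.castSucc = B i.succ - B i.castSucc - 2 := by
  unfold gapT
  rw [if_pos (by simpa using i.isLt), Fin.coeSucc_eq_succ]

lemma gapT_last (n d : ℕ) (B : Fin (d+1) → ℤ) :
    gapT n d B (Fin.last d) = (n:ℤ) + 2*d - 1 - B (Fin.last d) := by
  unfold gapT
  rw [if_neg (by simp)]

lemma gapT_nonneg {n d : ℕ} {B : Fin (d+1) → ℤ} (hB : Dset (n+2*d+1) d B) (h0 : B 0 = 0)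
    (i : Fin (d+1)) : 0 ≤ gapT n d B i := by
  induction i using Fin.lastCases with
  | last =>
    rw [gapT_last]
    have := hB.2
    rw [h0] at this
    push_cast at this
    omega
  | cast j =>
    rw [gapT_castSucc]
    have := hB.1 j
    omega

lemma aux_telescope {d : ℕ} (B : Fin (d+1) → ℤ) :
    ∑ i : Fin d, (B i.succ - B i.castSucc) = B (Fin.last d) - B 0 := by
  set f : ℕ → ℤ := fun j => if h : j < d+1 then B ⟨j,h⟩ else 0 with hf
  have e : ∀ i : Fin d, B i.succ - B i.castSucc = f ((i:ℕ)+1) - f (i:ℕ) := by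
    intro i
    have h1 : (i:ℕ)+1 < d+1 := by omega
    have h2 : (i:ℕ) < d+1 := by omega
    rw [hf]
    simp only [dif_pos h1, dif_pos h2]
    rw [show B ⟨(i:ℕ)+1, h1⟩ = B i.succ from congrArg B (Fin.ext (by simp)),
       show B ⟨(i:ℕ), h2⟩ = B i.castSucc from congrArg B (Fin.ext (by simp))]
  rw [Finset.sum_congr rfl (fun i _ => e i),
    Fin.sum_univ_eq_sum_range (fun j => f (j+1) - f j) d, Finset.sum_range_sub f]
  rw [hf]
  simp only [dif_pos (by omega : d < d+1), dif_pos (by omega : 0 < d+1)]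
  rw [show B ⟨d, by omega⟩ = B (Fin.last d) from congrArg B (Fin.ext (by simp)),
     show B ⟨0, by omega⟩ = B 0 from congrArg B (Fin.ext (by simp))]

lemma sum_gapT {n d : ℕ} {B : Fin (d+1) → ℤ} (hB : Dset (n+2*d+1) d B) (h0 : B 0 = 0) :
    ∑ i, gapT n d B i = (n:ℤ) - 1 := by
  rw [Fin.sum_univ_castSucc]
  rw [Finset.sum_congr rfl (fun i _ => gapT_castSucc n d B i), gapT_last]
  have : ∑ i : Fin d, (B i.succ - B i.castSucc - 2)
      = ∑ i : Fin d, (B i.succ - B i.castSucc) - 2*d := by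
    rw [Finset.sum_sub_distrib, Finset.sum_const]
    simp; ring
  rw [this, aux_telescope, h0]
  ring

lemma GB_zero (d : ℕ) (P : Fin (d+1) → ℕ) : GB d P 0 = 0 := by
  unfold GB; simp

lemma GB_succ (d : ℕ) (P : Fin (d+1) → ℕ) (i : Fin d) :
    GB d P i.succ = GB d P i.castSucc + 2 + padP d P (i:ℕ) := by
  unfold GB
  simp only [Fin.val_succ, Fin.coe_castSucc, Finset.sum_range_succ]
  push_cast
  ring

lemma GB_last_le (n d : ℕ) (P : Fin (d+1) → ℕ) (hP : ∑ i, P i = n - 1) (hn : 1 ≤ n) :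
    GB d P (Fin.last d) ≤ (n:ℤ) + 2*d - 1 := by
  unfold GB
  simp only [Fin.val_last]
  have h1 : ∑ j ∈ Finset.range d, padP d P j ≤ ∑ j ∈ Finset.range (d+1), padP d P j := by
    rw [Finset.sum_range_succ]
    have := padP_nonneg d P d
    omega
  rw [sum_padP, hP] at h1
  have : ((n - 1 : ℕ) : ℤ) = (n:ℤ) - 1 := by omega
  rw [this] at h1
  omega

lemma GB_dset (n d : ℕ) (P : Fin (d+1) → ℕ) (hP : ∑ i, P i = n - 1) (hn : 1 ≤ n) :
    Dset (n+2*d+1) d (GB d P) := by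
  constructor
  · intro i
    rw [GB_succ]
    have := padP_nonneg d P (i:ℕ)
    omega
  · rw [GB_zero]
    have := GB_last_le n d P hP hn
    push_cast
    omega

noncomputable def equivT (n d : ℕ) (hn : 1 ≤ n) :
    {B : Fin (d+1) → ℤ // Dset (n+2*d+1) d B ∧ B 0 = 0} ≃
    {P : Fin (d+1) → ℕ // ∑ i, P i = n - 1} where
  toFun := fun ⟨B, hB, h0⟩ => ⟨fun i => (gapT n d B i).toNat, by
    show ∑ i, (gapT n d B i).toNat = n - 1
    have hc : ((∑ i, (gapT n d B i).toNat : ℕ) : ℤ) = ∑ i, gapT n d B i := by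
      push_cast
      exact Finset.sum_congr rfl fun i _ => Int.toNat_of_nonneg (gapT_nonneg hB h0 i)
    have := sum_gapT hB h0
    omega⟩
  invFun := fun ⟨P, hP⟩ => ⟨GB d P, GB_dset n d P hP hn, GB_zero d P⟩
  left_inv := by
    rintro ⟨B, hB, h0⟩
    ext i : 2
    have key : ∀ v (hv : v < d+1), GB d (fun i => (gapT n d B i).toNat) ⟨v, hv⟩ = B ⟨v, hv⟩ := by
      intro v
      induction v with
      | zero =>
        intro hv
        rw [show (⟨0, hv⟩ : Fin (d+1)) = 0 from rfl, GB_zero, h0]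
      | succ v ih =>
        intro hv
        have hv' : v < d+1 := by omega
        have hvd : v < d := by omega
        have e1 : (⟨v+1, hv⟩ : Fin (d+1)) = (⟨v, hvd⟩ : Fin d).succ := Fin.ext (by simp)
        have e2 : (⟨v, hv'⟩ : Fin (d+1)) = (⟨v, hvd⟩ : Fin d).castSucc := Fin.ext (by simp)
        rw [e1, GB_succ, ← e2, ih hv']
        have e3 : padP d (fun i => (gapT n d B i).toNat) v = gapT n d B ⟨v, hv'⟩ := by
          unfold padP
          rw [dif_pos hv']
          exact Int.toNat_of_nonneg (gapT_nonneg hB h0 _)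
        rw [e3, e2, gapT_castSucc, ← e1, ← e2]
        ring
    obtain ⟨v, hv⟩ := i
    exact key v hv
  right_inv := by
    rintro ⟨P, hP⟩
    ext i : 2
    show (gapT n d (GB d P) i).toNat = P i
    induction i using Fin.lastCases with
    | last =>
      rw [gapT_last]
      have hsum : ∑ j ∈ Finset.range (d+1), padP d P j = (n:ℤ) - 1 := by
        rw [sum_padP, hP]; omega
      have : GB d P (Fin.last d) = (n:ℤ) - 1 - padP d P d + 2*d := by
        unfold GB
        simp only [Fin.val_last]
        rw [← hsum, Finset.sum_range_succ]
        push_cast; ring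
      rw [this]
      have e : padP d P d = (P (Fin.last d) : ℤ) := by
        unfold padP
        rw [dif_pos (by omega : d < d+1)]
        exact congrArg (fun x => ((P x : ℕ) : ℤ)) (Fin.ext (by simp))
      rw [e]
      omega
    | cast j =>
      rw [gapT_castSucc, GB_succ]
      have e : padP d P (j:ℕ) = (P j.castSucc : ℤ) := by
        unfold padP
        rw [dif_pos (by omega : (j:ℕ) < d+1)]
        exact congrArg (fun x => ((P x : ℕ) : ℤ)) (Fin.ext (by simp))
      rw [e]
      omega

lemma finite_H (n d : ℕ) : Finite {P : Fin (d+1) → ℕ // ∑ i, P i = n - 1} :=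
  Finite.of_equiv _ (Sym.equivNatSumOfFintype (Fin (d+1)) (n-1))

lemma card_H (n d : ℕ) (hn : 1 ≤ n) :
    Nat.card {P : Fin (d+1) → ℕ // ∑ i, P i = n - 1} = (n+d-1).choose d := by
  have hc := Sym.card_sym_eq_choose (α := Fin (d+1)) (n-1)
  rw [← Nat.card_congr (Sym.equivNatSumOfFintype (Fin (d+1)) (n-1)),
    Nat.card_eq_fintype_card, hc, Fintype.card_fin]
  rw [show d + 1 + (n-1) - 1 = n + d - 1 by omega]
  rw [← Nat.choose_symm (by omega : d ≤ n + d - 1)]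
  congr 1
  omega

lemma finite_T (n d : ℕ) (hn : 1 ≤ n) :
    Finite {B : Fin (d+1) → ℤ // Dset (n+2*d+1) d B ∧ B 0 = 0} :=
  letI := finite_H n d
  Finite.of_equiv _ (equivT n d hn).symm

lemma card_T (n d : ℕ) (hn : 1 ≤ n) :
    Nat.card {B : Fin (d+1) → ℤ // Dset (n+2*d+1) d B ∧ B 0 = 0} = (n+d-1).choose d := by
  rw [Nat.card_congr (equivT n d hn), card_H n d hn]

/-- If S is a convex full subquiver of Q̃^{(d,n)} such that π is
injective on S_0 and π(S_0) is pairwise non-intertwining of maximal size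
(n+d-1 choose d), then S contains at most one vertex from each ν_d-orbit; in
particular S meets each ν_d-orbit exactly once, i.e. S is a slice. -/
theorem convex_triangulation_is_slice (n d : ℕ) (S : Set (Fin (d+1) → ℤ))
    (hS : ∀ X ∈ S, Dset (n + 2*d + 1) d X)
    (hconv : ∀ A ∈ S, ∀ B ∈ S, ∀ X,
      Relation.ReflTransGen (TArrow (n + 2*d + 1) d) A X →
      Relation.ReflTransGen (TArrow (n + 2*d + 1) d) X B → X ∈ S)
    (hinj : Set.InjOn (fun A => fun j => pimod (n + 2*d + 1) (A j)) S)
    (hnon : ∀ A ∈ S, ∀ B ∈ S, A ≠ B →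
      ¬ Intertw (n + 2*d + 1) d (fun j => pimod (n + 2*d + 1) (A j))
        (fun j => pimod (n + 2*d + 1) (B j)))
    (hcard : Nat.card S = (n + d - 1).choose d) :
    (∀ A ∈ S, ∀ k : ℤ, (fun j => A j + k) ∈ S → k = 0) ∧
    (∀ A, Dset (n + 2*d + 1) d A → ∃! k : ℤ, (fun j => A j + k) ∈ S) := by
  rcases Nat.eq_zero_or_pos n with hn0 | hn
  · -- n = 0 : Dset is empty
    have hDempty : ∀ A : Fin (d+1) → ℤ, ¬ Dset (n + 2*d + 1) d A := by
      intro A hA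
      have := aux_dset_m_ge hA
      omega
    exact ⟨fun A hA => absurd (hS A hA) (hDempty A),
           fun A hA => absurd hA (hDempty A)⟩
  · -- n ≥ 1
    have part1 : ∀ A ∈ S, ∀ k : ℤ, (fun j => A j + k) ∈ S → k = 0 := by
      rcases Nat.lt_or_ge n 2 with hn1 | hn2
      · -- n = 1: S is a singleton
        have h1 : n = 1 := by omega
        have hcard1 : Nat.card S = 1 := by
          rw [hcard, h1, show 1 + d - 1 = d by omega, Nat.choose_self]
        have hsub := (Nat.card_eq_one_iff_unique.mp hcard1).1
        intro A hA k hk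
        have he : (⟨A, hA⟩ : S) = ⟨fun j => A j + k, hk⟩ := @Subsingleton.elim _ hsub _ _
        have := congrFun (congrArg Subtype.val he) 0
        simp only [] at this
        omega
      · -- n ≥ 2
        have hm3 : 2*d + 3 ≤ n + 2*d + 1 := by omega
        have key : ∀ A ∈ S, ∀ k : ℤ, 0 < k → (fun j => A j + k) ∈ S → False := by
          intro A hA k hkpos hk
          have hDA := hS A hA
          have p1 := aux_path_succ hDA hm3
          have hD1 : Dset (n+2*d+1) d (fun j => A j + 1) := aux_dset_shift hDA 1
          have p2 := aux_path_shift hD1 hm3 (k-1).toNat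
          have e : (fun i => (fun j => A j + 1) i + (((k-1).toNat : ℕ) : ℤ))
              = fun j => A j + k := by
            funext i
            simp only []
            rw [Int.toNat_of_nonneg (by omega)]
            ring
          rw [e] at p2
          have hA1 : (fun j => A j + 1) ∈ S := hconv A hA _ hk _ p1 p2
          have hne : A ≠ fun j => A j + 1 := by
            intro h
            have := congrFun h 0
            omega
          exact hnon A hA _ hA1 hne (aux_intertw_succ hDA)
        intro A hA k hk
        rcases lt_trichotomy k 0 with h | h | h
        · exfalso
          apply key _ hk (-k) (by omega)
          have e : (fun j => (fun j' => A j' + k) j + -k) = A := by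
            funext j; simp
          rw [e]; exact hA
        · exact h
        · exact absurd (key A hA k h hk) (by simp)
    refine ⟨part1, ?_⟩
    haveI : Finite {B : Fin (d+1) → ℤ // Dset (n+2*d+1) d B ∧ B 0 = 0} := finite_T n d hn
    have hnorm : ∀ A : Fin (d+1) → ℤ, Dset (n+2*d+1) d A →
        Dset (n+2*d+1) d (fun j => A j - A 0) ∧ (fun j => A j - A 0) 0 = 0 := by
      intro A hA
      refine ⟨?_, by simp⟩
      have := aux_dset_shift hA (-(A 0))
      simpa only [← sub_eq_add_neg] using this
    set φ : S → {B : Fin (d+1) → ℤ // Dset (n+2*d+1) d B ∧ B 0 = 0} :=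
      fun x => ⟨fun j => x.1 j - x.1 0, hnorm x.1 (hS x.1 x.2)⟩ with hφ
    have hφinj : Function.Injective φ := by
      intro x y h
      have hval := congrArg Subtype.val h
      simp only [hφ] at hval
      have hk : (fun j => x.1 j + (y.1 0 - x.1 0)) ∈ S := by
        have e : (fun j => x.1 j + (y.1 0 - x.1 0)) = y.1 := by
          funext j
          have := congrFun hval j
          omega
        rw [e]; exact y.2
      have h0 := part1 x.1 x.2 (y.1 0 - x.1 0) hk
      have : x.1 = y.1 := by
        funext j
        have := congrFun hval j
        omega
      exact Subtype.ext this
    have hφbij : Function.Bijective φ := by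
      rw [Nat.bijective_iff_injective_and_card]
      exact ⟨hφinj, by rw [hcard, card_T n d hn]⟩
    intro A hDA
    obtain ⟨x, hx⟩ := hφbij.surjective ⟨fun j => A j - A 0, hnorm A hDA⟩
    have hval := congrArg Subtype.val hx
    simp only [hφ] at hval
    have hmem : (fun j => A j + (x.1 0 - A 0)) ∈ S := by
      have e : (fun j => A j + (x.1 0 - A 0)) = x.1 := by
        funext j
        have := congrFun hval j
        omega
      rw [e]; exact x.2
    refine ⟨x.1 0 - A 0, hmem, ?_⟩
    intro k hk
    have h2 : (fun j => (fun j' => A j' + k) j + (x.1 0 - A 0 - k))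
        = fun j => A j + (x.1 0 - A 0) := by
      funext j; simp only []; ring
    have := part1 _ hk (x.1 0 - A 0 - k) (by rw [h2]; exact hmem)
    omega
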